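/- Let π be a prime number, n a positive integer, v an integer with v² ≡ 1 (mod n), u = n / gcd(v + 1, n), and t an integer such that r = v + n·t satisfies r² ≡ 1 (mod πn). Then the affine map e^{πu}.r : ℤ_{πn} → ℤ_{πn}, x ↦ r·x + π·u, is an involution (its composition with itself is the identity of ℤ_{πn}), and for every x ∈ ℤ_n, ι(v·x + u) = r·ι(x) + π·u in ℤ_{πn}. -/

import Mathlib

/-- The affine map `e^a.b : ZMod m → ZMod m`, `x ↦ b*x + a`. -/
def affineMap (m : ℕ) (a b : ℤ) : ZMod m → ZMod m :=
  fun x => (b : ZMod m) * x + (a : ZMod m)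

/-- `e^a.b` is a quasipolarity if it is an involution without fixed points. -/
def IsQuasipolarity (m : ℕ) (a b : ℤ) : Prop :=
  (affineMap m a b) ∘ (affineMap m a b) = id ∧ ∀ x : ZMod m, affineMap m a b x ≠ x

/-- The canonical injection `ι : ZMod n → ZMod (p*n)`, sending the class of `x`
modulo `n` to the class of `p*x` modulo `p*n`. -/
def iota (p n : ℕ) (x : ZMod n) : ZMod (p * n) := ((p * x.val : ℕ) : ZMod (p * n))

theorem stmt11 (p n : ℕ) (hp : p.Prime) (hn : 0 < n) (v : ℤ)
    (hv : v ^ 2 ≡ 1 [ZMOD (n : ℤ)]) (u : ℕ) (hu : u = n / Int.gcd (v + 1) (n : ℤ))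
    (t : ℤ) (hr : (v + (n : ℤ) * t) ^ 2 ≡ 1 [ZMOD ((p : ℤ) * n)]) :
    (affineMap (p * n) ((p : ℤ) * u) (v + (n : ℤ) * t)) ∘
        (affineMap (p * n) ((p : ℤ) * u) (v + (n : ℤ) * t)) = id ∧
      ∀ x : ZMod n,
        iota p n ((v : ZMod n) * x + (u : ZMod n)) =
          ((v + (n : ℤ) * t : ℤ) : ZMod (p * n)) * iota p n x
            + (((p : ℤ) * u : ℤ) : ZMod (p * n)) := by
  haveI : NeZero n := ⟨hn.ne'⟩
  haveI : NeZero (p * n) := ⟨Nat.mul_ne_zero hp.pos.ne' hn.ne'⟩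
  set r : ℤ := v + (n : ℤ) * t with hrdef
  -- g divides things
  have hg : (Int.gcd (v + 1) (n : ℤ) : ℤ) ∣ (v + 1) := Int.gcd_dvd_left _ _
  have hgn : Int.gcd (v + 1) (n : ℤ) ∣ n := by
    exact_mod_cast (Int.gcd_dvd_right _ _ : (Int.gcd (v+1) (n:ℤ) : ℤ) ∣ (n:ℤ))
  have hgu : Int.gcd (v + 1) (n : ℤ) * u = n := by
    rw [hu]; exact Nat.mul_div_cancel' hgn
  have hdvd : (n : ℤ) ∣ (v + 1) * (u : ℤ) := by
    obtain ⟨c, hc⟩ := hg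
    refine ⟨c, ?_⟩
    have h2 : (Int.gcd (v + 1) (n : ℤ) : ℤ) * u = n := by exact_mod_cast hgu
    rw [hc]; linear_combination c * h2
  have hkey : ((p : ℤ) * n) ∣ (r + 1) * ((p : ℤ) * u) := by
    have heq : (r + 1) * ((p : ℤ) * u) =
        (p : ℤ) * ((v + 1) * u) + ((p : ℤ) * n) * (t * u) := by rw [hrdef]; ring
    rw [heq]
    exact dvd_add (mul_dvd_mul_left _ hdvd) (dvd_mul_right _ _)
  constructor
  · funext x
    simp only [Function.comp_apply, affineMap, id_eq]
    have hr2 : ((r : ZMod (p * n)))^2 = 1 := by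
      have h := (ZMod.intCast_eq_intCast_iff (r^2) 1 (p*n)).mpr (by
        have : ((p*n : ℕ) : ℤ) = (p : ℤ) * n := by push_cast; ring
        rw [this]; exact hr)
      push_cast at h
      exact h
    have hzero : ((r : ZMod (p * n)) + 1) * (((p : ℤ) * u : ℤ) : ZMod (p * n)) = 0 := by
      have h := (ZMod.intCast_zmod_eq_zero_iff_dvd ((r + 1) * ((p : ℤ) * u)) (p*n)).mpr (by
        have : ((p*n : ℕ) : ℤ) = (p : ℤ) * n := by push_cast; ring
        rw [this]; exact hkey)
      push_cast at h ⊢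
      linear_combination h
    push_cast at hr2 hzero ⊢
    linear_combination x * hr2 + hzero
  · intro x
    set a := x.val with ha
    set b := ((v : ZMod n) * x + (u : ZMod n)).val with hbdef
    have hx : ((a : ℕ) : ZMod n) = x := by
      rw [ha]; simp [ZMod.natCast_val, ZMod.cast_id]
    have h1 : ((b : ℕ) : ZMod n) = (v : ZMod n) * x + (u : ZMod n) := by
      rw [hbdef]; simp [ZMod.natCast_val, ZMod.cast_id]
    have hb : (n : ℤ) ∣ (b : ℤ) - (v * a + u) := by
      apply (ZMod.intCast_zmod_eq_zero_iff_dvd _ n).mp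
      push_cast [hx, h1]
      ring
    obtain ⟨c, hc⟩ := hb
    have key : ((p : ℤ) * n) ∣ ((p : ℤ) * b - (r * ((p : ℤ) * a) + (p : ℤ) * u)) := by
      refine ⟨c - t * a, ?_⟩
      have hb2 : (b : ℤ) = v * a + u + n * c := by linarith
      rw [hb2, hrdef]; ring
    have h : ((((p : ℤ) * b - (r * ((p : ℤ) * a) + (p : ℤ) * u)) : ℤ) : ZMod (p*n)) = 0 :=
      (ZMod.intCast_zmod_eq_zero_iff_dvd _ (p*n)).mpr (by
        have hmn : ((p*n : ℕ) : ℤ) = (p : ℤ) * n := by push_cast; ring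
        rw [hmn]; exact key)
    simp only [iota, ← ha, ← hbdef]
    push_cast at h ⊢
    linear_combination h
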